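/- If an affine transformation M(Δ) = ΔA + Γ of ℝ⁵ maps D into D, fixes the plane Π₀ = {b=r=λ=0} pointwise, and maps (0,1,0,0,0) to (0,x,0,0,0), (1,1,1,1,1) to (1,y,y,1,y), and (1,0,0,1,1) to (1,0,0,1,z), then x = y = z and M = M_x, i.e., M(v,b,r,k,λ) = (v, xb, xr, k, xλ). -/

import Mathlib

def inD (q : Fin 5 → ℝ) : Prop :=
  q 0 * q 2 = q 1 * q 3 ∧ q 2 * (q 3 - 1) = q 4 * (q 0 - 1)

theorem kernel_is_multiple (A : Matrix (Fin 5) (Fin 5) ℝ) (Γ : Fin 5 → ℝ)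
    (hA : IsUnit A)
    (M : (Fin 5 → ℝ) → (Fin 5 → ℝ))
    (hM : ∀ q, M q = Matrix.vecMul q A + Γ)
    (hD : ∀ q, inD q → inD (M q))
    (hPi0 : ∀ q : Fin 5 → ℝ, q 1 = 0 → q 2 = 0 → q 4 = 0 → M q = q)
    (x y z : ℝ)
    (hx : M ![0, 1, 0, 0, 0] = ![0, x, 0, 0, 0])
    (hy : M ![1, 1, 1, 1, 1] = ![1, y, y, 1, y])
    (hz : M ![1, 0, 0, 1, 1] = ![1, 0, 0, 1, z]) :
    x = y ∧ y = z ∧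
      ∀ q : Fin 5 → ℝ, M q = ![q 0, x * q 1, x * q 2, q 3, x * q 4] := by
  have h0 : M 0 = 0 := hPi0 0 rfl rfl rfl
  have hΓ : Γ = 0 := by
    have := hM 0
    rw [h0] at this
    simpa using this.symm
  subst hΓ
  have key : ∀ q : Fin 5 → ℝ, ∀ j, M q j =
      q 0 * A 0 j + q 1 * A 1 j + q 2 * A 2 j + q 3 * A 3 j + q 4 * A 4 j := by
    intro q j
    simp [hM, Matrix.vecMul, dotProduct, Fin.sum_univ_five]
  have he0 : M ![1,0,0,0,0] = ![(1:ℝ),0,0,0,0] := hPi0 _ rfl rfl rfl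
  have he3 : M ![0,0,0,1,0] = ![(0:ℝ),0,0,1,0] := hPi0 _ rfl rfl rfl
  have F0 : ∀ j, A 0 j = ![(1:ℝ),0,0,0,0] j := by
    intro j
    have := congrFun he0 j
    rw [key] at this
    simpa using this
  have F3 : ∀ j, A 3 j = ![(0:ℝ),0,0,1,0] j := by
    intro j
    have := congrFun he3 j
    rw [key] at this
    simpa using this
  have F1 : ∀ j, A 1 j = x * ![(0:ℝ),1,0,0,0] j := by
    intro j
    have := congrFun hx j
    rw [key] at this
    fin_cases j <;> simpa using this
  have Fz : ∀ j, A 4 j = ![(0:ℝ),0,0,0,z] j := by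
    intro j
    have := congrFun hz j
    rw [key] at this
    have h0 := F0 j; have h3 := F3 j
    fin_cases j <;> simp_all <;> linarith
  have Fy : ∀ j, A 2 j = ![(0:ℝ), y - x, y, 0, y - z] j := by
    intro j
    have := congrFun hy j
    rw [key] at this
    have h0 := F0 j; have h1 := F1 j; have h3 := F3 j; have h4 := Fz j
    fin_cases j <;> simp_all <;> linarith
  -- the design point
  have hp : inD ![(3:ℝ),3,2,2,1] := by constructor <;> simp <;> norm_num
  have hMp : ∀ j, M ![(3:ℝ),3,2,2,1] j = ![(3:ℝ), x + 2*y, 2*y, 2, 2*y - z] j := by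
    intro j
    rw [key]
    have h0 := F0 j; have h1 := F1 j; have h2 := Fy j; have h3 := F3 j; have h4 := Fz j
    fin_cases j <;> simp_all <;> ring
  obtain ⟨hd1, hd2⟩ := hD _ hp
  rw [hMp 0, hMp 1, hMp 2, hMp 3] at hd1
  rw [hMp 0, hMp 2, hMp 3, hMp 4] at hd2
  simp at hd1 hd2
  have hxy : x = y := by linarith
  have hyz : y = z := by linarith
  refine ⟨hxy, hyz, ?_⟩
  intro q
  funext j
  rw [key]
  have h0 := F0 j; have h1 := F1 j; have h2 := Fy j; have h3 := F3 j; have h4 := Fz j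
  fin_cases j <;> simp_all <;> ring
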